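/- Let h > 0, κ > 0, and let r : [−h,h] → ℝ be twice continuously differentiable with r(−h) = r(h) = 1 and 0 < r(t) < 1 for t ∈ (−h,h), satisfying 4·r·r'' − 4·(r')² − (1 − r⁴) = 0 on (−h,h) and (1−r²)²/(4r²) + (r'/r)² = κ² on (−h,h). If u : [−h,h] → ℝ is continuous on [−h,h], twice differentiable on (−h,h), satisfies u''(t) + ((1/2)(1/r(t)² + r(t)²) − κ²)·u(t) = 0 on (−h,h) and u(−h) = u(h) = 0, then there exists a constant c ∈ ℝ with u(t) = c·(1/r(t) − r(t)) for all t ∈ [−h,h]. -/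

import Mathlib

open Set

lemma jmop_const_of_deriv_zero {a b : ℝ} (W : ℝ → ℝ)
    (hW : ∀ t ∈ Ioo a b, HasDerivAt W 0 t) :
    ∀ s ∈ Ioo a b, ∀ t ∈ Ioo a b, W s = W t := by
  have key : ∀ s ∈ Ioo a b, ∀ t ∈ Ioo a b, s ≤ t → W t = W s := by
    intro s hs t ht hst
    have hsub : Icc s t ⊆ Ioo a b := fun x hx => ⟨lt_of_lt_of_le hs.1 hx.1, lt_of_le_of_lt hx.2 ht.2⟩
    exact constant_of_has_deriv_right_zero
      (fun x hx => ((hW x (hsub hx)).continuousAt).continuousWithinAt)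
      (fun x hx => ((hW x (hsub (Ico_subset_Icc_self hx))).hasDerivWithinAt))
      t ⟨hst, le_rfl⟩
  intro s hs t ht
  rcases le_total s t with hle | hle
  · exact (key s hs t ht hle).symm
  · exact key t ht s hs hle

lemma jmop_ode2_unique {a b t₀ M : ℝ} (ht₀ : t₀ ∈ Ioo a b)
    (q v v' : ℝ → ℝ) (hM : ∀ t ∈ Ioo a b, |q t| ≤ M)
    (hv : ∀ t ∈ Ioo a b, HasDerivAt v (v' t) t)
    (hv' : ∀ t ∈ Ioo a b, HasDerivAt v' (-(q t) * v t) t)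
    (h0 : v t₀ = 0) (h0' : v' t₀ = 0) :
    ∀ t ∈ Ioo a b, v t = 0 := by
  set field : ℝ → ℝ × ℝ → ℝ × ℝ :=
    fun t p => if t ∈ Ioo a b then (p.2, -(q t) * p.1) else (0, 0) with hfield
  set K : NNReal := Real.toNNReal (max 1 M) with hK
  have hKR : (K : ℝ) = max 1 M := by
    rw [hK, Real.coe_toNNReal]
    exact le_trans zero_le_one (le_max_left _ _)
  have hlip : ∀ t, LipschitzOnWith K (field t) univ := by
    intro t
    apply LipschitzWith.lipschitzOnWith
    rw [lipschitzWith_iff_dist_le_mul]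
    intro p p'
    by_cases ht : t ∈ Ioo a b
    · simp only [hfield, if_pos ht]
      rw [Prod.dist_eq, Prod.dist_eq]
      have hq : |q t| ≤ M := hM t ht
      have h1 : dist p.2 p'.2 ≤ max (dist p.1 p'.1) (dist p.2 p'.2) := le_max_right _ _
      have h2 : dist (-(q t) * p.1) (-(q t) * p'.1) = |q t| * dist p.1 p'.1 := by
        rw [Real.dist_eq, Real.dist_eq, ← mul_sub, abs_mul, abs_neg]
      have hd1 : (0:ℝ) ≤ dist p.1 p'.1 := dist_nonneg
      have hd2 : (0:ℝ) ≤ dist p.2 p'.2 := dist_nonneg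
      rw [hKR]
      apply max_le
      · calc dist p.2 p'.2 ≤ max (dist p.1 p'.1) (dist p.2 p'.2) := h1
          _ ≤ max 1 M * max (dist p.1 p'.1) (dist p.2 p'.2) := by
              nlinarith [le_max_left (1:ℝ) M, le_max_left (dist p.1 p'.1) (dist p.2 p'.2),
                le_max_right (dist p.1 p'.1) (dist p.2 p'.2)]
      · rw [h2]
        calc |q t| * dist p.1 p'.1 ≤ M * dist p.1 p'.1 := by
              nlinarith [abs_nonneg (q t)]
          _ ≤ max 1 M * max (dist p.1 p'.1) (dist p.2 p'.2) := by
              nlinarith [le_max_right (1:ℝ) M, le_max_left (dist p.1 p'.1) (dist p.2 p'.2),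
                abs_nonneg (q t), le_trans (abs_nonneg (q t)) hq, le_max_left (1:ℝ) M]
    · simp only [hfield, if_neg ht]
      rw [dist_self]
      positivity
  have hfderiv : ∀ t ∈ Ioo a b,
      HasDerivAt (fun t => (v t, v' t)) (field t (v t, v' t)) t ∧ (v t, v' t) ∈ univ := by
    intro t ht
    refine ⟨?_, trivial⟩
    have heq : field t (v t, v' t) = (v' t, -(q t) * v t) := by
      simp only [hfield]; rw [if_pos ht]
    rw [heq]
    exact (hv t ht).prodMk (hv' t ht)
  have hgderiv : ∀ t ∈ Ioo a b,
      HasDerivAt (fun _ : ℝ => ((0:ℝ), (0:ℝ))) (field t ((0:ℝ),(0:ℝ))) t ∧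
        ((0:ℝ),(0:ℝ)) ∈ univ := by
    intro t ht
    refine ⟨?_, trivial⟩
    have heq : field t ((0:ℝ),(0:ℝ)) = ((0:ℝ),(0:ℝ)) := by
      by_cases ht' : t ∈ Ioo a b <;> simp [hfield, ht']
    rw [heq]
    exact hasDerivAt_const t _
  have key := ODE_solution_unique_of_mem_Ioo (v := field) (s := fun _ => univ)
    (K := K) (fun t _ => hlip t) (f := fun t => (v t, v' t)) (g := fun _ => ((0:ℝ), (0:ℝ))) ht₀
    hfderiv hgderiv (by simp [h0, h0'])
  intro t ht
  exact congrArg Prod.fst (key ht)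

/-- First-mode part of Proposition 2.2: every Dirichlet solution of the `n = 1`
Jacobi equation on the catenoid `C_h` is proportional to `φ = 1/r − r`. -/
theorem jacobi_mode_one_proportional
    (h κ : ℝ) (hh : 0 < h) (hκ : 0 < κ)
    (r r' r'' : ℝ → ℝ)
    (hrderiv : ∀ t ∈ Set.Icc (-h) h, HasDerivWithinAt r (r' t) (Set.Icc (-h) h) t)
    (hrderiv' : ∀ t ∈ Set.Icc (-h) h, HasDerivWithinAt r' (r'' t) (Set.Icc (-h) h) t)
    (hrcont : ContinuousOn r'' (Set.Icc (-h) h))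
    (hbv₁ : r (-h) = 1) (hbv₂ : r h = 1)
    (hrange : ∀ t ∈ Set.Ioo (-h) h, 0 < r t ∧ r t < 1)
    (hode : ∀ t ∈ Set.Ioo (-h) h,
      4 * r t * r'' t - 4 * (r' t) ^ 2 - (1 - (r t) ^ 4) = 0)
    (hfirst : ∀ t ∈ Set.Ioo (-h) h,
      (1 - (r t) ^ 2) ^ 2 / (4 * (r t) ^ 2) + (r' t / r t) ^ 2 = κ ^ 2)
    (u u' u'' : ℝ → ℝ)
    (hucont : ContinuousOn u (Set.Icc (-h) h))
    (huderiv : ∀ t ∈ Set.Ioo (-h) h, HasDerivAt u (u' t) t)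
    (huderiv' : ∀ t ∈ Set.Ioo (-h) h, HasDerivAt u' (u'' t) t)
    (hueq : ∀ t ∈ Set.Ioo (-h) h,
      u'' t + ((1 / 2) * (1 / (r t) ^ 2 + (r t) ^ 2) - κ ^ 2) * u t = 0)
    (hu₁ : u (-h) = 0) (hu₂ : u h = 0) :
    ∃ c : ℝ, ∀ t ∈ Set.Icc (-h) h, u t = c * (1 / r t - r t) := by
  have hhh : -h < h := by linarith
  have h0mem : (0:ℝ) ∈ Ioo (-h) h := ⟨by linarith, hh⟩
  have hOI : Ioo (-h) h ⊆ Icc (-h) h := Ioo_subset_Icc_self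
  -- positivity of r on the closed interval
  have hrpos : ∀ t ∈ Icc (-h) h, 0 < r t := by
    intro t ht
    rcases eq_or_lt_of_le ht.1 with he | hlt
    · rw [← he, hbv₁]; norm_num
    · rcases eq_or_lt_of_le ht.2 with he2 | hlt2
      · rw [he2, hbv₂]; norm_num
      · exact (hrange t ⟨hlt, hlt2⟩).1
  have hrne : ∀ t ∈ Icc (-h) h, r t ≠ 0 := fun t ht => (hrpos t ht).ne'
  -- derivatives of r in the interior
  have hrD : ∀ t ∈ Ioo (-h) h, HasDerivAt r (r' t) t := fun t ht =>
    (hrderiv t (hOI ht)).hasDerivAt (Icc_mem_nhds ht.1 ht.2)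
  have hr'D : ∀ t ∈ Ioo (-h) h, HasDerivAt r' (r'' t) t := fun t ht =>
    (hrderiv' t (hOI ht)).hasDerivAt (Icc_mem_nhds ht.1 ht.2)
  -- continuity of r, r' on the closed interval
  have hrcontOn : ContinuousOn r (Icc (-h) h) := fun t ht => (hrderiv t ht).continuousWithinAt
  have hr'contOn : ContinuousOn r' (Icc (-h) h) := fun t ht => (hrderiv' t ht).continuousWithinAt
  -- the solution φ and the potential q
  set φ : ℝ → ℝ := fun t => 1 / r t - r t with hφdef
  set φ' : ℝ → ℝ := fun t => -(r' t) * (1 / (r t)^2 + 1) with hφ'def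
  set q : ℝ → ℝ := fun t => (1/2) * (1 / (r t)^2 + (r t)^2) - κ^2 with hqdef
  have hφ₁ : φ (-h) = 0 := by simp [hφdef, hbv₁]
  have hφ₂ : φ h = 0 := by simp [hφdef, hbv₂]
  have hφD : ∀ t ∈ Ioo (-h) h, HasDerivAt φ (φ' t) t := by
    intro t ht
    have hne := hrne t (hOI ht)
    have h1 : HasDerivAt (fun s => (r s)⁻¹) (-(r' t) / (r t)^2) t := (hrD t ht).inv hne
    have h2 := h1.sub (hrD t ht)
    have h3 : HasDerivAt φ (-(r' t)/(r t)^2 - r' t) t := by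
      simpa [hφdef, one_div, Pi.sub_def] using h2
    convert h3 using 1
    simp only [hφ'def]
    field_simp
    ring
  have hφ'D : ∀ t ∈ Ioo (-h) h, HasDerivAt φ' (-(q t) * φ t) t := by
    intro t ht
    have hne := hrne t (hOI ht)
    have hr := hrD t ht
    have hr' := hr'D t ht
    have h1 : HasDerivAt (fun s => (r s)^2) (2 * r t * r' t) t := by
      simpa [mul_comm, mul_assoc, Pi.pow_def] using hr.pow 2
    have hne2 : (r t)^2 ≠ 0 := pow_ne_zero 2 hne
    have h2 : HasDerivAt (fun s => ((r s)^2)⁻¹) (-(2 * r t * r' t) / ((r t)^2)^2) t :=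
      h1.inv hne2
    have h3 : HasDerivAt (fun s => 1 / (r s)^2 + 1) (-(2 * r t * r' t) / ((r t)^2)^2) t := by
      simpa [one_div] using h2.add_const 1
    have h4 := (hr'.neg).mul h3
    have h5 : HasDerivAt φ'
        (-(r'' t) * (1 / (r t)^2 + 1) + (-(r' t)) * (-(2 * r t * r' t) / ((r t)^2)^2)) t := by
      simpa [hφ'def, Pi.mul_def, Pi.neg_def] using h4
    convert h5 using 1
    have hodet := hode t ht
    have hft := hfirst t ht
    simp only [hqdef, hφdef]
    have hft' : (1 - r t ^ 2) ^ 2 * r t ^ 2 + r' t ^ 2 * (4 * r t ^ 2)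
        = κ ^ 2 * (4 * r t ^ 2 * r t ^ 2) := by
      field_simp at hft
      linear_combination (r t ^ 2) * hft
    have hH : (1 - r t ^ 2) ^ 2 + 4 * r' t ^ 2 = r t ^ 2 * 4 * κ ^ 2 := by
      field_simp at hft
      linear_combination hft
    field_simp
    linear_combination (-(1 - r t ^ 2) / 2) * hH + ((1 + r t ^ 2) / 2) * hodet
  -- continuity facts
  have hqcont : ContinuousOn q (Icc (-h) h) := by
    apply ContinuousOn.sub _ continuousOn_const
    apply ContinuousOn.mul continuousOn_const
    exact (continuousOn_const.div (hrcontOn.pow 2)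
      (fun t ht => pow_ne_zero 2 (hrne t ht))).add (hrcontOn.pow 2)
  have hφcont : ContinuousOn φ (Icc (-h) h) :=
    (continuousOn_const.div hrcontOn hrne).sub hrcontOn
  have hφ'cont : ContinuousOn φ' (Icc (-h) h) :=
    (hr'contOn.neg).mul ((continuousOn_const.div (hrcontOn.pow 2)
      (fun t ht => pow_ne_zero 2 (hrne t ht))).add continuousOn_const)
  -- bound on q
  obtain ⟨M, hM⟩ := isCompact_Icc.exists_bound_of_continuousOn hqcont
  have hMIoo : ∀ t ∈ Ioo (-h) h, |q t| ≤ M := fun t ht => by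
    simpa [Real.norm_eq_abs] using hM t (hOI ht)
  -- the ODE for u
  have hu''eq : ∀ t ∈ Ioo (-h) h, u'' t = -(q t) * u t := by
    intro t ht
    have := hueq t ht
    simp only [hqdef]
    nlinarith [this]
  -- the continuous extension of u'
  set g : ℝ → ℝ := fun s => -(q s) * u s with hgdef
  have hgcont : ContinuousOn g (Icc (-h) h) := (hqcont.neg).mul hucont
  set U' : ℝ → ℝ := fun t => u' 0 + ∫ s in (0:ℝ)..t, g s with hU'def
  have hU'eq : ∀ t ∈ Ioo (-h) h, u' t = U' t := by
    intro t ht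
    have hsub : uIcc 0 t ⊆ Ioo (-h) h := (ordConnected_Ioo).uIcc_subset h0mem ht
    have hint : ∀ s ∈ uIcc 0 t, HasDerivAt u' (g s) s := fun s hs => by
      have hd := huderiv' s (hsub hs)
      rwa [hu''eq s (hsub hs)] at hd
    have hinteg : IntervalIntegrable g MeasureTheory.volume 0 t :=
      (hgcont.mono (hsub.trans hOI)).intervalIntegrable
    have := intervalIntegral.integral_eq_sub_of_hasDerivAt hint hinteg
    simp only [hU'def]
    rw [this]
    ring
  have hU'cont : ContinuousOn U' (Icc (-h) h) := by
    have h0I : (0:ℝ) ∈ uIcc (-h) h := by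
      rw [uIcc_of_le (le_of_lt hhh)]; exact hOI h0mem
    have := intervalIntegral.continuousOn_primitive_interval'
      (μ := MeasureTheory.volume) (f := g) (b₁ := -h) (b₂ := h) (a := 0)
      ((hgcont.mono (by rw [uIcc_of_le (le_of_lt hhh)])).intervalIntegrable) h0I
    rw [uIcc_of_le (le_of_lt hhh)] at this
    exact continuousOn_const.add this
  -- the Wronskian
  set W : ℝ → ℝ := fun t => u t * φ' t - u' t * φ t with hWdef
  have hWD : ∀ t ∈ Ioo (-h) h, HasDerivAt W 0 t := by
    intro t ht
    have hd := ((huderiv t ht).mul (hφ'D t ht)).sub ((huderiv' t ht).mul (hφD t ht))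
    have hd' : HasDerivAt W
        (u' t * φ' t + u t * (-(q t) * φ t) - (u'' t * φ t + u' t * φ' t)) t := hd
    convert hd' using 1
    rw [hu''eq t ht]
    ring
  have hWconst := jmop_const_of_deriv_zero W hWD
  -- the Wronskian vanishes
  set Wext : ℝ → ℝ := fun t => u t * φ' t - U' t * φ t with hWextdef
  have hWextcont : ContinuousOn Wext (Icc (-h) h) :=
    (hucont.mul hφ'cont).sub (hU'cont.mul hφcont)
  have hWWext : ∀ t ∈ Ioo (-h) h, W t = Wext t := by
    intro t ht
    simp only [hWdef, hWextdef, hU'eq t ht]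
  have hclos : h ∈ closure (Ioo (-h) h) := by
    rw [closure_Ioo (ne_of_lt hhh)]
    exact ⟨le_of_lt hhh, le_refl h⟩
  have hnb : (nhdsWithin h (Ioo (-h) h)).NeBot := mem_closure_iff_nhdsWithin_neBot.mp hclos
  have htend1 : Filter.Tendsto Wext (nhdsWithin h (Ioo (-h) h)) (nhds (Wext h)) :=
    ((hWextcont h (right_mem_Icc.mpr (le_of_lt hhh))).mono_left (nhdsWithin_mono h hOI))
  have htend2 : Filter.Tendsto Wext (nhdsWithin h (Ioo (-h) h)) (nhds (W 0)) := by
    apply Filter.Tendsto.congr' _ tendsto_const_nhds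
    filter_upwards [self_mem_nhdsWithin] with t ht
    rw [← hWWext t ht]
    exact hWconst 0 h0mem t ht
  have hWexth : Wext h = 0 := by
    simp [hWextdef, hu₂, hφ₂]
  have hW0 : W 0 = 0 := by
    have := tendsto_nhds_unique htend2 htend1
    rw [this, hWexth]
  -- φ(0) > 0
  have hr0 := hrange 0 h0mem
  have hφ0pos : 0 < φ 0 := by
    simp only [hφdef]
    have h1 : r 0 < 1 / r 0 := by
      rw [lt_div_iff₀ hr0.1]
      nlinarith [hr0.1, hr0.2]
    linarith
  -- the constant
  set c : ℝ := u 0 / φ 0 with hcdef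
  set v : ℝ → ℝ := fun t => u t - c * φ t with hvdef
  set v' : ℝ → ℝ := fun t => u' t - c * φ' t with hv'def
  have hv0 : v 0 = 0 := by
    simp only [hvdef, hcdef]
    field_simp
    ring
  have hv'0 : v' 0 = 0 := by
    simp only [hv'def, hcdef]
    have hW0' : u 0 * φ' 0 - u' 0 * φ 0 = 0 := hW0
    rw [div_mul_eq_mul_div, sub_eq_zero, eq_div_iff (ne_of_gt hφ0pos)]
    linarith
  have hvD : ∀ t ∈ Ioo (-h) h, HasDerivAt v (v' t) t := fun t ht =>
    (huderiv t ht).sub ((hφD t ht).const_mul c)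
  have hv'D : ∀ t ∈ Ioo (-h) h, HasDerivAt v' (-(q t) * v t) t := by
    intro t ht
    have hd := (huderiv' t ht).sub ((hφ'D t ht).const_mul c)
    have : u'' t - c * (-(q t) * φ t) = -(q t) * v t := by
      rw [hu''eq t ht]
      simp only [hvdef]
      ring
    rwa [this] at hd
  have hvzero := jmop_ode2_unique h0mem q v v' hMIoo hvD hv'D hv0 hv'0
  refine ⟨c, ?_⟩
  intro t ht
  rcases eq_or_lt_of_le ht.1 with he | hlt
  · rw [← he, hu₁, hbv₁]; norm_num
  · rcases eq_or_lt_of_le ht.2 with he2 | hlt2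
    · rw [he2, hu₂, hbv₂]; norm_num
    · have := hvzero t ⟨hlt, hlt2⟩
      simp only [hvdef, hφdef] at this
      linarith
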